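/- As the shadowing parameter ms → ∞, the Fisher-Snedecor F density converges pointwise to the Gamma (Nakagami-m power) density: for fixed m > 0, γ̄ > 0 and γ > 0, lim_{ms → ∞} m^m (ms·γ̄)^{ms} γ^{m-1} / (B(m, ms)·(mγ + ms·γ̄)^{m+ms}) = (m/γ̄)^m γ^{m-1} e^{−mγ/γ̄} / Γ(m). -/

import Mathlib

open Filter Real

lemma gamma_ratio_tendsto_one (m : ℝ) (hm : 0 < m) :
    Tendsto (fun x : ℝ => Real.Gamma (m + x) / (Real.Gamma x * x ^ m)) atTop (nhds 1) := by
  have hconv := Real.convexOn_log_Gamma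
  set f : ℝ → ℝ := Real.log ∘ Real.Gamma with hf
  -- bounds
  have hlow : ∀ x : ℝ, 2 ≤ x → m * Real.log (x - 1) ≤ f (x + m) - f x := by
    intro x hx
    have h1 : (0:ℝ) < x - 1 := by linarith
    have hs := hconv.slope_mono_adjacent (x := x - 1) (y := x) (z := x + m)
      (Set.mem_Ioi.mpr h1) (Set.mem_Ioi.mpr (by linarith)) (by linarith) (by linarith)
    have hG : Real.Gamma x = (x - 1) * Real.Gamma (x - 1) := by
      have := Real.Gamma_add_one (show x - 1 ≠ 0 by positivity)
      simpa using this
    have hfl : f x - f (x - 1) = Real.log (x - 1) := by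
      simp only [hf, Function.comp_apply, hG]
      rw [Real.log_mul (by positivity) (Real.Gamma_pos_of_pos h1).ne']
      ring
    rw [hfl] at hs
    have : Real.log (x - 1) / (x - (x - 1)) = Real.log (x - 1) := by ring_nf
    rw [this] at hs
    have hs' : Real.log (x - 1) ≤ (f (x + m) - f x) / m := by
      simpa using hs
    calc m * Real.log (x - 1) ≤ m * ((f (x + m) - f x) / m) := by
          exact mul_le_mul_of_nonneg_left hs' hm.le
      _ = f (x + m) - f x := by field_simp
  have hup : ∀ x : ℝ, 2 ≤ x → f (x + m) - f x ≤ m * Real.log (x + m) := by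
    intro x hx
    have hs := hconv.slope_mono_adjacent (x := x) (y := x + m) (z := x + m + 1)
      (Set.mem_Ioi.mpr (by linarith)) (Set.mem_Ioi.mpr (by linarith)) (by linarith) (by linarith)
    have hG : Real.Gamma (x + m + 1) = (x + m) * Real.Gamma (x + m) := by
      have := Real.Gamma_add_one (show x + m ≠ 0 by positivity)
      simpa using this
    have hfl : f (x + m + 1) - f (x + m) = Real.log (x + m) := by
      simp only [hf, Function.comp_apply, hG]
      rw [Real.log_mul (by positivity) (Real.Gamma_pos_of_pos (by linarith)).ne']
      ring
    have hs2 : (f (x + m) - f x) / m ≤ Real.log (x + m) := by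
      have e1 : x + m - x = m := by ring
      have e2 : x + m + 1 - (x + m) = 1 := by ring
      rw [e1, e2] at hs
      simpa [hfl] using hs
    calc f (x + m) - f x = m * ((f (x + m) - f x) / m) := by field_simp
      _ ≤ m * Real.log (x + m) := mul_le_mul_of_nonneg_left hs2 hm.le
  -- squeeze the log expression
  have hDlow : Tendsto (fun x : ℝ => m * (Real.log (x - 1) - Real.log x)) atTop (nhds 0) := by
    have h1 : Tendsto (fun x : ℝ => (x - 1) / x) atTop (nhds 1) := by
      have : Tendsto (fun x : ℝ => 1 - x⁻¹) atTop (nhds 1) := by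
        simpa using tendsto_inv_atTop_zero.const_sub (1:ℝ)
      refine this.congr' ?_
      filter_upwards [eventually_gt_atTop (0:ℝ)] with x hx
      field_simp
    have h2 : Tendsto (fun x : ℝ => Real.log ((x - 1) / x)) atTop (nhds 0) := by
      have := (Real.continuousAt_log one_ne_zero).tendsto.comp h1
      simpa [Function.comp_def] using this
    have h3 : Tendsto (fun x : ℝ => Real.log (x - 1) - Real.log x) atTop (nhds 0) := by
      refine h2.congr' ?_
      filter_upwards [eventually_ge_atTop (2:ℝ)] with x hx
      rw [Real.log_div (by linarith) (by linarith)]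
    simpa using h3.const_mul m
  have hDup : Tendsto (fun x : ℝ => m * (Real.log (x + m) - Real.log x)) atTop (nhds 0) := by
    have h1 : Tendsto (fun x : ℝ => (x + m) / x) atTop (nhds 1) := by
      have : Tendsto (fun x : ℝ => 1 + m * x⁻¹) atTop (nhds 1) := by
        simpa using tendsto_const_nhds.add (tendsto_inv_atTop_zero.const_mul m)
      refine this.congr' ?_
      filter_upwards [eventually_gt_atTop (0:ℝ)] with x hx
      field_simp
    have h2 : Tendsto (fun x : ℝ => Real.log ((x + m) / x)) atTop (nhds 0) := by
      have := (Real.continuousAt_log one_ne_zero).tendsto.comp h1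
      simpa [Function.comp_def] using this
    have h3 : Tendsto (fun x : ℝ => Real.log (x + m) - Real.log x) atTop (nhds 0) := by
      refine h2.congr' ?_
      filter_upwards [eventually_ge_atTop (2:ℝ)] with x hx
      rw [Real.log_div (by positivity) (by linarith)]
    simpa using h3.const_mul m
  have hD : Tendsto (fun x : ℝ => f (x + m) - f x - m * Real.log x) atTop (nhds 0) := by
    refine tendsto_of_tendsto_of_tendsto_of_le_of_le' hDlow hDup ?_ ?_
    · filter_upwards [eventually_ge_atTop (2:ℝ)] with x hx
      have := hlow x hx; nlinarith [this]
    · filter_upwards [eventually_ge_atTop (2:ℝ)] with x hx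
      have := hup x hx; nlinarith [this]
  have hexp : Tendsto (fun x : ℝ => Real.exp (f (x + m) - f x - m * Real.log x)) atTop (nhds 1) := by
    have := (Real.continuous_exp.tendsto 0).comp hD
    simpa [Function.comp_def] using this
  refine hexp.congr' ?_
  filter_upwards [eventually_gt_atTop (0:ℝ)] with x hx
  have hγ1 : 0 < Real.Gamma (x + m) := Real.Gamma_pos_of_pos (by linarith)
  have hγ2 : 0 < Real.Gamma x := Real.Gamma_pos_of_pos hx
  rw [Real.exp_sub, Real.exp_sub]
  simp only [hf, Function.comp_apply]
  rw [Real.exp_log hγ1, Real.exp_log hγ2, mul_comm m (Real.log x), ← Real.rpow_def_of_pos hx,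
    div_div, add_comm m x]

theorem fisher_pdf_tendsto_gamma_density (m g γ : ℝ) (hm : 0 < m) (hg : 0 < g) (hγ : 0 < γ) :
    Tendsto
      (fun ms : ℝ =>
        m ^ m * (ms * g) ^ ms * γ ^ (m - 1) /
          ((Real.Gamma m * Real.Gamma ms / Real.Gamma (m + ms)) *
            (m * γ + ms * g) ^ (m + ms)))
      atTop
      (nhds ((m / g) ^ m * γ ^ (m - 1) * Real.exp (-(m * γ) / g) / Real.Gamma m)) := by
  set c : ℝ := m * γ / g with hc
  have hcpos : 0 < c := by positivity
  set K : ℝ := γ ^ (m - 1) * m ^ m / (Real.Gamma m * g ^ m) with hK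
  have hA := gamma_ratio_tendsto_one m hm
  have hB := tendsto_one_add_div_rpow_exp c
  have hq : Tendsto (fun x : ℝ => 1 + c / x) atTop (nhds 1) := by
    simpa [div_eq_mul_inv] using tendsto_const_nhds.add (tendsto_inv_atTop_zero.const_mul c)
  have hC : Tendsto (fun x : ℝ => (1 + c / x) ^ m) atTop (nhds 1) := by
    have := hq.rpow_const (Or.inr hm.le)
    simpa using this
  have hBC : Tendsto (fun x : ℝ => (1 + c / x) ^ x * (1 + c / x) ^ m) atTop
      (nhds (Real.exp c * 1)) := hB.mul hC
  have hmain : Tendsto (fun x : ℝ =>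
      K * (Real.Gamma (m + x) / (Real.Gamma x * x ^ m)) /
        ((1 + c / x) ^ x * (1 + c / x) ^ m)) atTop
      (nhds (K * 1 / (Real.exp c * 1))) :=
    (tendsto_const_nhds.mul hA).div hBC (by positivity)
  have hval : K * 1 / (Real.exp c * 1) =
      (m / g) ^ m * γ ^ (m - 1) * Real.exp (-(m * γ) / g) / Real.Gamma m := by
    have h1 : Real.exp (-(m * γ) / g) = (Real.exp c)⁻¹ := by
      rw [hc, ← Real.exp_neg, neg_div]
    rw [h1, Real.div_rpow hm.le hg.le, hK]
    have hΓ := (Real.Gamma_pos_of_pos hm).ne'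
    have he := (Real.exp_pos c).ne'
    have hgm : (g:ℝ) ^ m ≠ 0 := by positivity
    field_simp
  rw [← hval]
  refine hmain.congr' ?_
  filter_upwards [eventually_gt_atTop (0:ℝ)] with x hx
  have hxg : 0 < x * g := by positivity
  have hqx : 0 < 1 + c / x := by positivity
  have h1 : m * γ + x * g = (x * g) * (1 + c / x) := by
    rw [hc]; field_simp; ring
  have h2 : (m * γ + x * g) ^ (m + x) =
      x ^ m * g ^ m * (x * g) ^ x * ((1 + c / x) ^ m * (1 + c / x) ^ x) := by
    rw [h1, Real.mul_rpow hxg.le hqx.le, Real.rpow_add hxg, Real.rpow_add hqx,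
      Real.mul_rpow hx.le hg.le]
  rw [h2]
  have hΓm := (Real.Gamma_pos_of_pos hm).ne'
  have hΓx := (Real.Gamma_pos_of_pos hx).ne'
  have hΓmx := (Real.Gamma_pos_of_pos (by linarith : (0:ℝ) < m + x)).ne'
  have hxm : (x:ℝ) ^ m ≠ 0 := by positivity
  have hgm : (g:ℝ) ^ m ≠ 0 := by positivity
  have hxgx : (x * g) ^ x ≠ 0 := by positivity
  have hq1 : (1 + c / x) ^ x ≠ 0 := by positivity
  have hq2 : (1 + c / x) ^ m ≠ 0 := by positivity
  rw [hK]
  field_simp
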